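/- Let h : ℝ^m → ℝ be differentiable with ∇h Lipschitz continuous with constant L₁ > 0, and let A : ℝⁿ → ℝ^m be continuously differentiable such that the gradient of the composition h∘A is Lipschitz continuous with constant L₂ > 0. Fix x̄ ∈ ℝⁿ and define g : ℝⁿ → ℝ by g(x) := h(A(x̄) + DA(x̄)(x − x̄)) − h(A(x)), where DA(x̄) is the Jacobian of A at x̄. Then g is differentiable and ‖∇g(x)‖ ≤ (L₁·‖DA(x̄)‖² + L₂)·‖x − x̄‖ for all x ∈ ℝⁿ, where ‖DA(x̄)‖ is the operator norm of DA(x̄). -/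

import Mathlib

lemma grad_norm_eq {E : Type*} [NormedAddCommGroup E] [InnerProductSpace ℝ E]
    [CompleteSpace E] (f : E → ℝ) (y z : E) :
    ‖gradient f y - gradient f z‖ = ‖fderiv ℝ f y - fderiv ℝ f z‖ := by
  rw [gradient, gradient, ← LinearIsometryEquiv.map_sub, LinearIsometryEquiv.norm_map]

theorem stmt7 {n m : ℕ} (h : EuclideanSpace ℝ (Fin m) → ℝ)
    (A : EuclideanSpace ℝ (Fin n) → EuclideanSpace ℝ (Fin m))
    (L₁ L₂ : ℝ) (hL₁ : 0 < L₁) (hL₂ : 0 < L₂)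
    (hdiff : Differentiable ℝ h)
    (hgradlip : ∀ y z, ‖gradient h y - gradient h z‖ ≤ L₁ * ‖y - z‖)
    (hA : ContDiff ℝ 1 A)
    (hcomplip : ∀ y z, ‖gradient (fun w => h (A w)) y - gradient (fun w => h (A w)) z‖ ≤
      L₂ * ‖y - z‖)
    (xbar : EuclideanSpace ℝ (Fin n))
    (g : EuclideanSpace ℝ (Fin n) → ℝ)
    (hg : ∀ x, g x = h (A xbar + fderiv ℝ A xbar (x - xbar)) - h (A x)) :
    Differentiable ℝ g ∧
      ∀ x, ‖gradient g x‖ ≤ (L₁ * ‖fderiv ℝ A xbar‖ ^ 2 + L₂) * ‖x - xbar‖ := by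
  have hAd : Differentiable ℝ A := hA.differentiable one_ne_zero
  set DA := fderiv ℝ A xbar with hDAdef
  set F : EuclideanSpace ℝ (Fin n) → EuclideanSpace ℝ (Fin m) :=
    fun x => A xbar + DA (x - xbar) with hFdef
  have hgfun : g = fun x => h (F x) - h (A x) := funext hg
  -- F has derivative DA everywhere
  have hFderiv : ∀ x, HasFDerivAt F DA x := by
    intro x
    have h1 := DA.hasFDerivAt.comp x ((hasFDerivAt_id x).sub_const xbar)
    rw [ContinuousLinearMap.comp_id] at h1
    exact h1.const_add (A xbar)
  have hFd : Differentiable ℝ F := fun x => (hFderiv x).differentiableAt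
  have hgd : Differentiable ℝ g := by
    rw [hgfun]
    exact (hdiff.comp hFd).sub (hdiff.comp hAd)
  refine ⟨hgd, fun x => ?_⟩
  -- fderiv of g
  have hcomp_diff : Differentiable ℝ (fun w => h (A w)) := hdiff.comp hAd
  have hchain : ∀ y, fderiv ℝ (fun w => h (A w)) y = (fderiv ℝ h (A y)).comp (fderiv ℝ A y) := by
    intro y
    exact fderiv_comp y (hdiff (A y)) (hAd y)
  have hgderiv : fderiv ℝ g x = ((fderiv ℝ h (F x)).comp DA) - fderiv ℝ (fun w => h (A w)) x := by
    have h1 : HasFDerivAt (fun x => h (F x)) ((fderiv ℝ h (F x)).comp DA) x :=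
      (hdiff (F x)).hasFDerivAt.comp x (hFderiv x)
    have h2 : HasFDerivAt (fun w => h (A w)) (fderiv ℝ (fun w => h (A w)) x) x :=
      (hcomp_diff x).hasFDerivAt
    have := (h1.sub h2).fderiv
    rw [hgfun]
    exact this
  have hFxbar : F xbar = A xbar := by simp [hFdef]
  -- rewrite fderiv g x as difference of differences
  have hkey : fderiv ℝ g x =
      ((fderiv ℝ h (F x) - fderiv ℝ h (A xbar)).comp DA)
        - (fderiv ℝ (fun w => h (A w)) x - fderiv ℝ (fun w => h (A w)) xbar) := by
    rw [hgderiv, hchain xbar, ← hDAdef]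
    ext v
    simp [ContinuousLinearMap.sub_comp]
  have hnorm : ‖gradient g x‖ = ‖fderiv ℝ g x‖ := by
    rw [gradient, LinearIsometryEquiv.norm_map]
  rw [hnorm, hkey]
  have hlip1 : ‖fderiv ℝ h (F x) - fderiv ℝ h (A xbar)‖ ≤ L₁ * ‖F x - A xbar‖ := by
    rw [← grad_norm_eq]; exact hgradlip _ _
  have hlip2 : ‖fderiv ℝ (fun w => h (A w)) x - fderiv ℝ (fun w => h (A w)) xbar‖
      ≤ L₂ * ‖x - xbar‖ := by
    rw [← grad_norm_eq]; exact hcomplip _ _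
  have hFx : ‖F x - A xbar‖ ≤ ‖DA‖ * ‖x - xbar‖ := by
    have : F x - A xbar = DA (x - xbar) := by simp [hFdef]
    rw [this]; exact DA.le_opNorm _
  calc ‖(fderiv ℝ h (F x) - fderiv ℝ h (A xbar)).comp DA
        - (fderiv ℝ (fun w => h (A w)) x - fderiv ℝ (fun w => h (A w)) xbar)‖
      ≤ ‖(fderiv ℝ h (F x) - fderiv ℝ h (A xbar)).comp DA‖
        + ‖fderiv ℝ (fun w => h (A w)) x - fderiv ℝ (fun w => h (A w)) xbar‖ :=
        norm_sub_le _ _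
    _ ≤ ‖fderiv ℝ h (F x) - fderiv ℝ h (A xbar)‖ * ‖DA‖ + L₂ * ‖x - xbar‖ := by
        gcongr
        exact ContinuousLinearMap.opNorm_comp_le _ _
    _ ≤ (L₁ * (‖DA‖ * ‖x - xbar‖)) * ‖DA‖ + L₂ * ‖x - xbar‖ := by
        gcongr
        exact hlip1.trans (by gcongr)
    _ = (L₁ * ‖DA‖ ^ 2 + L₂) * ‖x - xbar‖ := by ring
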